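/- Let g : ℝᵈ → ℝ be C² and Lipschitz with constant L_g. Suppose x̂*, x(t) ∈ ℝᵈ satisfy x̂* - x(t) = (t̂* - t) v for some vector v with ∇g(x̂*) · v ≥ α̂² > 0, g(x̂*) = 0, and |½ v · H_g(ξ) v| ≤ M̂ for all ξ on the segment between x(t) and x̂*. Then for t < t̂*: |t - t̂*| ≤ (M̂(t - t̂*)² + L_g ‖x(t) - x̂*‖) / α̂². -/

import Mathlib

open InnerProductSpace Set

set_option maxHeartbeats 1000000 in

theorem discrete_crossing_time_estimate {d : ℕ}
    (g : EuclideanSpace ℝ (Fin d) → ℝ)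
    (xhat xt v : EuclideanSpace ℝ (Fin d))
    (t that Mhat Lg αhat : ℝ)
    (hgC2 : ContDiff ℝ 2 g)
    (hαhat : 0 < αhat ^ 2) (hMhat : 0 < Mhat) (hLg : 0 < Lg)
    (hLip : ∀ y z, |g y - g z| ≤ Lg * ‖y - z‖)
    (hsec : xhat - xt = (that - t) • v)
    (htrans : αhat ^ 2 ≤ (inner ℝ (gradient g xhat) v : ℝ))
    (hg0 : g xhat = 0)
    (hHess : ∀ s ∈ Set.Icc (0 : ℝ) 1,
      |(1 / 2 : ℝ) * (inner ℝ (fderiv ℝ (gradient g) (xt + s • (xhat - xt)) v) v : ℝ)| ≤ Mhat)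
    (hlt : t < that) :
    |t - that| ≤ (Mhat * (t - that) ^ 2 + Lg * ‖xt - xhat‖) / αhat ^ 2 := by
  classical
  set w : EuclideanSpace ℝ (Fin d) := xt - xhat with hw_def
  have hw : w = (t - that) • v := by
    rw [hw_def, show ((t - that) : ℝ) = -(that - t) by ring, neg_smul, ← hsec]
    abel
  have hgdiff : Differentiable ℝ g := hgC2.differentiable (by norm_num)
  have hC1 : ContDiff ℝ 1 (fderiv ℝ g) := hgC2.fderiv_right (by norm_num)
  have hGdiff : Differentiable ℝ (gradient g) := by
    have : gradient g = fun x => (toDual ℝ (EuclideanSpace ℝ (Fin d))).symm (fderiv ℝ g x) := rfl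
    rw [this]
    exact (toDual ℝ (EuclideanSpace ℝ (Fin d))).symm.differentiable.comp
      (hC1.differentiable (by norm_num))
  have hgradinner : ∀ (x u : EuclideanSpace ℝ (Fin d)),
      (inner ℝ (gradient g x) u : ℝ) = fderiv ℝ g x u := by
    intro x u
    simp [gradient, InnerProductSpace.toDual_symm_apply]
  have hL : ∀ s : ℝ, HasDerivAt (fun s : ℝ => xhat + s • w) w s := by
    intro s
    simpa using ((hasDerivAt_id s).smul_const w).const_add xhat
  set φ : ℝ → ℝ := fun s => g (xhat + s • w) with hφ_def
  set ψ : ℝ → ℝ := fun s => (inner ℝ (gradient g (xhat + s • w)) w : ℝ) with hψ_def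
  have hφ : ∀ s : ℝ, HasDerivAt φ (ψ s) s := by
    intro s
    have h1 := (hgdiff (xhat + s • w)).hasFDerivAt.comp_hasDerivAt s (hL s)
    simp only [hψ_def, hgradinner]
    exact h1
  have hψ : ∀ s : ℝ, HasDerivAt ψ
      ((inner ℝ (fderiv ℝ (gradient g) (xhat + s • w) w) w : ℝ)) s := by
    intro s
    have hG := (hGdiff (xhat + s • w)).hasFDerivAt.comp_hasDerivAt s (hL s)
    have h2 := (innerSL ℝ w).hasFDerivAt.comp_hasDerivAt s hG
    have heq : ψ = fun s : ℝ => innerSL ℝ w (gradient g (xhat + s • w)) := by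
      funext s
      rw [hψ_def, innerSL_apply_apply]
      exact real_inner_comm _ _
    rw [heq]
    exact h2.congr_deriv (by rw [innerSL_apply_apply]; exact real_inner_comm _ _)
  set C : ℝ := 2 * Mhat * (t - that) ^ 2 with hC_def
  have hCnonneg : 0 ≤ C := by positivity
  have hψbound : ∀ s ∈ Icc (0 : ℝ) 1,
      |(inner ℝ (fderiv ℝ (gradient g) (xhat + s • w) w) w : ℝ)| ≤ C := by
    intro s hs
    have hpt : xhat + s • w = xt + (1 - s) • (xhat - xt) := by
      rw [hw_def]; module
    have hs' : (1 - s) ∈ Icc (0 : ℝ) 1 := ⟨by linarith [hs.2], by linarith [hs.1]⟩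
    have hH := hHess (1 - s) hs'
    have hquad : (inner ℝ (fderiv ℝ (gradient g) (xhat + s • w) w) w : ℝ)
        = (t - that) ^ 2 *
          (inner ℝ (fderiv ℝ (gradient g) (xt + (1 - s) • (xhat - xt)) v) v : ℝ) := by
      rw [hpt, hw, map_smul, real_inner_smul_left, real_inner_smul_right]
      ring
    rw [hquad, abs_mul, abs_of_nonneg (by positivity : (0:ℝ) ≤ (t - that) ^ 2)]
    rw [abs_mul, abs_of_nonneg (by norm_num : (0:ℝ) ≤ (1/2 : ℝ))] at hH
    have h2M : |(inner ℝ (fderiv ℝ (gradient g) (xt + (1 - s) • (xhat - xt)) v) v : ℝ)|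
        ≤ 2 * Mhat := by linarith
    calc (t - that) ^ 2 * |(inner ℝ (fderiv ℝ (gradient g) (xt + (1 - s) • (xhat - xt)) v) v : ℝ)|
        ≤ (t - that) ^ 2 * (2 * Mhat) := mul_le_mul_of_nonneg_left h2M (by positivity)
      _ = C := by rw [hC_def]; ring
  have hψlip : ∀ s ∈ Icc (0 : ℝ) 1, |ψ s - ψ 0| ≤ C * s := by
    intro s hs
    have := norm_image_sub_le_of_norm_deriv_le_segment'
      (f := ψ) (f' := fun s => (inner ℝ (fderiv ℝ (gradient g) (xhat + s • w) w) w : ℝ))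
      (a := 0) (b := 1)
      (fun x _ => (hψ x).hasDerivWithinAt)
      (fun x hx => by
        simpa [Real.norm_eq_abs] using hψbound x (Ico_subset_Icc_self hx))
      s hs
    simpa [Real.norm_eq_abs] using this
  have key : |φ 1 - φ 0 - ψ 0| ≤ C / 2 := by
    have hderiv : ∀ (c : ℝ) (s : ℝ),
        HasDerivAt (fun s => φ s - s * ψ 0 + c * s ^ 2) (ψ s - ψ 0 + c * (2 * s)) s := by
      intro c s
      have h1 := ((hφ s).sub ((hasDerivAt_id s).mul_const (ψ 0))).add
        ((hasDerivAt_pow 2 s).const_mul c)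
      exact h1.congr_deriv (by ring)
    have hupper : φ 1 - φ 0 - ψ 0 ≤ C / 2 := by
      have hanti : AntitoneOn (fun s => φ s - s * ψ 0 + (-(C/2)) * s ^ 2) (Icc 0 1) := by
        apply antitoneOn_of_hasDerivWithinAt_nonpos (convex_Icc 0 1)
          (fun x _ => ((hderiv (-(C/2)) x).continuousAt).continuousWithinAt)
          (fun x _ => ((hderiv (-(C/2)) x).hasDerivWithinAt))
        intro x hx
        rw [interior_Icc] at hx
        have hb := hψlip x ⟨le_of_lt hx.1, le_of_lt hx.2⟩
        have : ψ x - ψ 0 ≤ C * x := (abs_le.mp hb).2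
        nlinarith
      have := hanti (left_mem_Icc.mpr zero_le_one) (right_mem_Icc.mpr zero_le_one) zero_le_one
      simp only at this
      nlinarith [this]
    have hlower : -(C / 2) ≤ φ 1 - φ 0 - ψ 0 := by
      have hmono : MonotoneOn (fun s => φ s - s * ψ 0 + (C/2) * s ^ 2) (Icc 0 1) := by
        apply monotoneOn_of_hasDerivWithinAt_nonneg (convex_Icc 0 1)
          (fun x _ => ((hderiv (C/2) x).continuousAt).continuousWithinAt)
          (fun x _ => ((hderiv (C/2) x).hasDerivWithinAt))
        intro x hx
        rw [interior_Icc] at hx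
        have hb := hψlip x ⟨le_of_lt hx.1, le_of_lt hx.2⟩
        have : -(C * x) ≤ ψ x - ψ 0 := (abs_le.mp hb).1
        nlinarith
      have := hmono (left_mem_Icc.mpr zero_le_one) (right_mem_Icc.mpr zero_le_one) zero_le_one
      simp only at this
      nlinarith [this]
    exact abs_le.mpr ⟨hlower, hupper⟩
  have hφ0 : φ 0 = 0 := by simp [hφ_def, hg0]
  have hφ1 : φ 1 = g xt := by
    have h1 : xhat + (1:ℝ) • w = xt := by rw [hw_def]; module
    simp only [hφ_def]
    rw [h1]
  have hψ0 : ψ 0 = (t - that) * (inner ℝ (gradient g xhat) v : ℝ) := by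
    simp only [hψ_def, zero_smul, add_zero, hw]
    rw [real_inner_smul_right]
  have hgxt : -g xt ≤ Lg * ‖xt - xhat‖ := by
    have h := hLip xhat xt
    rw [hg0, norm_sub_rev] at h
    have h2 := le_abs_self (0 - g xt)
    linarith
  have hψ0le : (that - t) * αhat ^ 2 ≤ -ψ 0 := by
    rw [hψ0]
    have h1 : (that - t) * αhat ^ 2 ≤ (that - t) * (inner ℝ (gradient g xhat) v : ℝ) :=
      mul_le_mul_of_nonneg_left htrans (by linarith)
    linarith [h1]
  have hkey2 : φ 1 - φ 0 - ψ 0 ≤ C / 2 := (abs_le.mp key).2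
  have hC2 : C / 2 = Mhat * (t - that) ^ 2 := by rw [hC_def]; ring
  have hmain : (that - t) * αhat ^ 2 ≤ Mhat * (t - that) ^ 2 + Lg * ‖xt - xhat‖ := by
    have hsplit : -ψ 0 = (φ 1 - φ 0 - ψ 0) + (-g xt) := by rw [hφ0, hφ1]; ring
    linarith
  rw [abs_of_neg (by linarith : t - that < 0), le_div_iff₀ hαhat]
  linarith
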